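/- Let A^(1) ∈ ℂ^{N1×N1}, A^(2) ∈ ℂ^{N2×N2}, B^(1) ∈ ℂ^{N1}, B^(2) ∈ ℂ^{N2}, and let u : ℝ² → ℂ be continuous. Define the 2D SSM state x(t1,t2) = ∫_0^{t1} ∫_0^{t2} (e^{(t1−s1)A^(1)} B^(1)) ⊗ (e^{(t2−s2)A^(2)} B^(2)) u(s1,s2) ds2 ds1 and the partial state x_{2}(t1,t2) = ∫_0^{t1} e^{(t1−s1)A^(1)} B^(1) u(s1,t2) ds1 ∈ ℂ^{N1}. Then for all t1, t2 ≥ 0, the map t2 ↦ x(t1,t2) is differentiable and ∂x/∂t2 (t1,t2) = A^(2) ·^(2) x(t1,t2) + x_{2}(t1,t2) ⊗ B^(2), where (A^(2) ·^(2) X)_{n1,n2} = Σ_m A^(2)_{n2,m} X_{n1,m}. -/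

import Mathlib

open MeasureTheory intervalIntegral

section Aux

/-- Fubini for interval integrals of continuous functions. -/
lemma ssm2dAux.swap_cont {E : Type*} [NormedAddCommGroup E] [NormedSpace ℝ E]
    (f : ℝ → ℝ → E) (hf : Continuous fun p : ℝ × ℝ => f p.1 p.2) (a b c d : ℝ) :
    (∫ x in a..b, ∫ y in c..d, f x y) = ∫ y in c..d, ∫ x in a..b, f x y := by
  have hint : Integrable (Function.uncurry f)
      ((volume.restrict (Set.uIoc a b)).prod (volume.restrict (Set.uIoc c d))) := by
    rw [Measure.prod_restrict]
    have : IntegrableOn (Function.uncurry f)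
        (Set.uIcc a b ×ˢ Set.uIcc c d) (volume.prod volume) :=
      hf.continuousOn.integrableOn_compact (isCompact_uIcc.prod isCompact_uIcc)
    exact this.mono_set (Set.prod_mono Set.uIoc_subset_uIcc Set.uIoc_subset_uIcc)
  have key : (∫ x in Set.uIoc a b, ∫ y in Set.uIoc c d, f x y) = ∫ y in Set.uIoc c d, ∫ x in Set.uIoc a b, f x y :=
    MeasureTheory.integral_integral_swap hint
  simp_rw [intervalIntegral_eq_integral_uIoc, MeasureTheory.integral_smul]
  rw [key, smul_comm]

/-- Derivative of a linear functional of the matrix exponential flow. -/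
lemma ssm2dAux.expDerivL {N : ℕ} (A : Matrix (Fin N) (Fin N) ℂ) {F : Type*}
    [NormedAddCommGroup F] [NormedSpace ℝ F]
    (L : Matrix (Fin N) (Fin N) ℂ →ₗ[ℝ] F) (t : ℝ) :
    HasDerivAt (fun r : ℝ => L (NormedSpace.exp (r • A)))
      (L (A * NormedSpace.exp (t • A))) t := by
  letI : SeminormedRing (Matrix (Fin N) (Fin N) ℂ) := Matrix.linftyOpSemiNormedRing
  letI : NormedRing (Matrix (Fin N) (Fin N) ℂ) := Matrix.linftyOpNormedRing
  letI : NormedAlgebra ℝ (Matrix (Fin N) (Fin N) ℂ) := Matrix.linftyOpNormedAlgebra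
  have h := hasDerivAt_exp_smul_const' (𝕂 := ℝ) A t
  exact (L.toContinuousLinearMap.hasFDerivAt.comp_hasDerivAt t h : _)

/-- Continuity of the matrix exponential flow. -/
lemma ssm2dAux.expCont {N : ℕ} (A : Matrix (Fin N) (Fin N) ℂ) {f : ℝ → ℝ} (hf : Continuous f) :
    Continuous (fun r : ℝ => NormedSpace.exp (f r • A)) := by
  letI : SeminormedRing (Matrix (Fin N) (Fin N) ℂ) := Matrix.linftyOpSemiNormedRing
  letI : NormedRing (Matrix (Fin N) (Fin N) ℂ) := Matrix.linftyOpNormedRing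
  letI : NormedAlgebra ℂ (Matrix (Fin N) (Fin N) ℂ) := Matrix.linftyOpNormedAlgebra
  letI : NormedAlgebra ℚ (Matrix (Fin N) (Fin N) ℂ) := NormedAlgebra.restrictScalars ℚ ℂ _
  exact NormedSpace.exp_continuous.comp (hf.smul continuous_const)

/-- Contraction with a matrix along the second index, as a linear map. -/
noncomputable def ssm2dAux.contrL {N1 N2 : ℕ} (M : Matrix (Fin N2) (Fin N2) ℂ) :
    (Fin N1 → Fin N2 → ℂ) →ₗ[ℝ] (Fin N1 → Fin N2 → ℂ) where
  toFun X := fun n1 n2 => ∑ m, M n2 m * X n1 m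
  map_add' X Y := by funext n1 n2; simp [mul_add, Finset.sum_add_distrib]
  map_smul' r X := by
    funext n1 n2
    simp only [Pi.smul_apply, smul_eq_mul, Complex.real_smul, RingHom.id_apply,
      Finset.mul_sum]
    exact Finset.sum_congr rfl fun m _ => by ring

/-- The contraction, as a bundled linear map into continuous linear maps. -/
noncomputable def ssm2dAux.PL {N1 N2 : ℕ} :
    Matrix (Fin N2) (Fin N2) ℂ →ₗ[ℝ]
      ((Fin N1 → Fin N2 → ℂ) →L[ℝ] (Fin N1 → Fin N2 → ℂ)) where
  toFun M := LinearMap.toContinuousLinearMap (ssm2dAux.contrL M)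
  map_add' M M' := by
    ext X n1 n2
    simp [ssm2dAux.contrL, add_mul, Finset.sum_add_distrib]
  map_smul' r M := by
    ext X n1 n2
    simp only [ssm2dAux.contrL, LinearMap.coe_toContinuousLinearMap', LinearMap.coe_mk,
      AddHom.coe_mk, Pi.smul_apply, smul_eq_mul, Complex.real_smul, RingHom.id_apply,
      ContinuousLinearMap.coe_smul', Matrix.smul_apply, Finset.mul_sum]
    exact Finset.sum_congr rfl fun m _ => by ring

@[simp] lemma ssm2dAux.PL_apply {N1 N2 : ℕ} (M : Matrix (Fin N2) (Fin N2) ℂ)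
    (X : Fin N1 → Fin N2 → ℂ) (n1 : Fin N1) (n2 : Fin N2) :
    ssm2dAux.PL M X n1 n2 = ∑ m, M n2 m * X n1 m := rfl

/-- Tensoring with a fixed vector on the right, as a continuous linear map. -/
noncomputable def ssm2dAux.tensCLM {N1 N2 : ℕ} (B : Fin N2 → ℂ) :
    (Fin N1 → ℂ) →L[ℝ] (Fin N1 → Fin N2 → ℂ) :=
  LinearMap.toContinuousLinearMap
  { toFun := fun v n1 n2 => v n1 * B n2
    map_add' := fun v w => by funext n1 n2; simp [add_mul]
    map_smul' := fun r v => by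
      funext n1 n2
      simp only [Pi.smul_apply, smul_eq_mul, Complex.real_smul, RingHom.id_apply]
      ring }

@[simp] lemma ssm2dAux.tensCLM_apply {N1 N2 : ℕ} (B : Fin N2 → ℂ)
    (v : Fin N1 → ℂ) (n1 : Fin N1) (n2 : Fin N2) :
    ssm2dAux.tensCLM B v n1 n2 = v n1 * B n2 := rfl

end Aux

/-- **Differential equation for the 2D SSM state in the second time axis.**
With state
`x(t1,t2) = ∫_0^{t1}∫_0^{t2} (e^{(t1−s1)A1}B1) ⊗ (e^{(t2−s2)A2}B2) u(s1,s2) ds2 ds1`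
(a tensor in `ℂ^{N1×N2}`, `(a ⊗ b)_{n1,n2} = a_{n1} b_{n2}`) and partial state
`x₂(t1,t2) = ∫_0^{t1} e^{(t1−s1)A1}B1 u(s1,t2) ds1`, for all `t1, t2 ≥ 0` the
map `t2 ↦ x(t1,t2)` is differentiable with
`∂x/∂t2 = A2 ·⁽²⁾ x(t1,t2) + x₂(t1,t2) ⊗ B2`, where
`(A2 ·⁽²⁾ X)_{n1,n2} = Σ_m (A2)_{n2,m} X_{n1,m}`. -/
theorem ssm2d_state_partial_deriv_snd {N1 N2 : ℕ}
    (A1 : Matrix (Fin N1) (Fin N1) ℂ) (A2 : Matrix (Fin N2) (Fin N2) ℂ)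
    (B1 : Fin N1 → ℂ) (B2 : Fin N2 → ℂ)
    (u : ℝ → ℝ → ℂ) (hu : Continuous fun p : ℝ × ℝ => u p.1 p.2)
    (x : ℝ → ℝ → (Fin N1 → Fin N2 → ℂ))
    (hx : ∀ t1 t2 : ℝ, x t1 t2 =
      ∫ s1 in (0:ℝ)..t1, ∫ s2 in (0:ℝ)..t2,
        u s1 s2 • fun n1 n2 =>
          (NormedSpace.exp ((t1 - s1) • A1)).mulVec B1 n1 *
          (NormedSpace.exp ((t2 - s2) • A2)).mulVec B2 n2)
    (x2 : ℝ → ℝ → (Fin N1 → ℂ))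
    (hx2 : ∀ t1 t2 : ℝ, x2 t1 t2 =
      ∫ s1 in (0:ℝ)..t1,
        u s1 t2 • (NormedSpace.exp ((t1 - s1) • A1)).mulVec B1) :
    ∀ t1 t2 : ℝ, 0 ≤ t1 → 0 ≤ t2 →
      HasDerivAt (fun r : ℝ => x t1 r)
        ((fun n1 n2 => ∑ m, A2 n2 m * x t1 t2 n1 m) +
          fun n1 n2 => x2 t1 t2 n1 * B2 n2) t2 := by
  intro t1 t2 _ht1 _ht2
  open ssm2dAux in
  -- abbreviations
  set E2 : ℝ → Matrix (Fin N2) (Fin N2) ℂ := fun r => NormedSpace.exp (r • A2) with hE2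
  set h1 : ℝ → Fin N1 → ℂ :=
    fun s1 => (NormedSpace.exp ((t1 - s1) • A1)).mulVec B1 with hh1def
  set k : ℝ → Fin N2 → ℂ :=
    fun s2 => (NormedSpace.exp ((-s2) • A2)).mulVec B2 with hkdef
  set g : ℝ → ℝ → (Fin N1 → Fin N2 → ℂ) :=
    fun s1 s2 => u s1 s2 • fun n1 n2 => h1 s1 n1 * k s2 n2 with hgdef
  set F : ℝ → (Fin N1 → Fin N2 → ℂ) :=
    fun s2 => ∫ s1 in (0:ℝ)..t1, g s1 s2 with hFdef
  set Y : ℝ → (Fin N1 → Fin N2 → ℂ) :=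
    fun r => ∫ s2 in (0:ℝ)..r, F s2 with hYdef
  -- continuity facts
  have hh1 : Continuous h1 :=
    (ssm2dAux.expCont A1 (continuous_const.sub continuous_id)).matrix_mulVec continuous_const
  have hk : Continuous k :=
    (ssm2dAux.expCont A2 continuous_neg).matrix_mulVec continuous_const
  have hg : Continuous fun p : ℝ × ℝ => g p.1 p.2 := by
    apply hu.smul
    apply continuous_pi; intro n1; apply continuous_pi; intro n2
    exact (((continuous_apply n1).comp hh1).comp continuous_fst).mul
      (((continuous_apply n2).comp hk).comp continuous_snd)
  have hF : Continuous F := by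
    have h' : Continuous (Function.uncurry fun s2 s1 => g s1 s2) :=
      hg.comp continuous_swap
    exact continuous_parametric_intervalIntegral_of_continuous'
      (f := fun s2 s1 => g s1 s2) h' 0 t1
  -- exp factorization : exp ((r - s2) • A2) = E2 r * exp ((-s2) • A2)
  have hfact : ∀ r s2 : ℝ, NormedSpace.exp ((r - s2) • A2)
      = E2 r * NormedSpace.exp ((-s2) • A2) := by
    intro r s2
    rw [hE2]
    rw [← Matrix.exp_add_of_commute _ _ (((Commute.refl A2).smul_left r).smul_right (-s2))]
    congr 1
    rw [← add_smul]
    ring_nf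
  -- Step 1: x t1 r = PL (E2 r) (Y r)
  have hxr : ∀ r : ℝ, x t1 r = ssm2dAux.PL (E2 r) (Y r) := by
    intro r
    rw [hx t1 r]
    have hinner : ∀ s1 s2 : ℝ,
        (u s1 s2 • fun n1 n2 =>
          (NormedSpace.exp ((t1 - s1) • A1)).mulVec B1 n1 *
          (NormedSpace.exp ((r - s2) • A2)).mulVec B2 n2)
        = ssm2dAux.PL (E2 r) (g s1 s2) := by
      intro s1 s2
      funext n1 n2
      have : (NormedSpace.exp ((r - s2) • A2)).mulVec B2
          = (E2 r).mulVec (k s2) := by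
        rw [hkdef, Matrix.mulVec_mulVec, ← hfact]
      rw [this]
      have hmv : (E2 r).mulVec (k s2) n2 = ∑ m, E2 r n2 m * k s2 m := by
        simp [Matrix.mulVec, dotProduct]
      simp only [Pi.smul_apply, smul_eq_mul, ssm2dAux.PL_apply, hgdef]
      rw [hmv]
      simp only [Finset.mul_sum]
      exact Finset.sum_congr rfl fun m _ => by ring
    calc (∫ s1 in (0:ℝ)..t1, ∫ s2 in (0:ℝ)..r,
          u s1 s2 • fun n1 n2 =>
            (NormedSpace.exp ((t1 - s1) • A1)).mulVec B1 n1 *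
            (NormedSpace.exp ((r - s2) • A2)).mulVec B2 n2)
        = ∫ s1 in (0:ℝ)..t1, ∫ s2 in (0:ℝ)..r, ssm2dAux.PL (E2 r) (g s1 s2) := by
          simp_rw [hinner]
      _ = ∫ s1 in (0:ℝ)..t1, ssm2dAux.PL (E2 r) (∫ s2 in (0:ℝ)..r, g s1 s2) := by
          apply intervalIntegral.integral_congr
          intro s1 _
          exact (ssm2dAux.PL (E2 r)).intervalIntegral_comp_comm
            ((hg.comp (Continuous.prodMk_right s1)).intervalIntegrable 0 r)
      _ = ssm2dAux.PL (E2 r) (∫ s1 in (0:ℝ)..t1, ∫ s2 in (0:ℝ)..r, g s1 s2) := by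
          apply (ssm2dAux.PL (E2 r)).intervalIntegral_comp_comm
          have hgu : Continuous (Function.uncurry g) := hg
          have : Continuous fun s1 => ∫ s2 in (0:ℝ)..r, g s1 s2 :=
            continuous_parametric_intervalIntegral_of_continuous' (f := g) hgu 0 r
          exact this.intervalIntegrable 0 t1
      _ = ssm2dAux.PL (E2 r) (Y r) := by
          rw [hYdef, hFdef]
          congr 1
          exact ssm2dAux.swap_cont g hg 0 t1 0 r
  -- Step 2: derivative of Y
  have hY : HasDerivAt Y (F t2) t2 :=
    intervalIntegral.integral_hasDerivAt_right (hF.intervalIntegrable 0 t2)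
      (hF.stronglyMeasurableAtFilter volume (nhds t2)) hF.continuousAt
  -- Step 3: derivative of r ↦ PL (E2 r)
  have hc : HasDerivAt (fun r : ℝ => ssm2dAux.PL (N1 := N1) (E2 r))
      (ssm2dAux.PL (A2 * E2 t2)) t2 := ssm2dAux.expDerivL A2 ssm2dAux.PL t2
  -- combine
  have hmain := hc.clm_apply hY
  have hfun : (fun r : ℝ => ssm2dAux.PL (E2 r) (Y r)) = fun r : ℝ => x t1 r := by
    funext r; exact (hxr r).symm
  rw [hfun] at hmain
  -- identify the derivative value
  have hterm1 : ssm2dAux.PL (A2 * E2 t2) (Y t2)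
      = fun n1 n2 => ∑ m, A2 n2 m * x t1 t2 n1 m := by
    funext n1 n2
    rw [hxr t2]
    simp only [ssm2dAux.PL_apply, Matrix.mul_apply, Finset.sum_mul, Finset.mul_sum]
    rw [Finset.sum_comm]
    apply Finset.sum_congr rfl
    intro m _
    apply Finset.sum_congr rfl
    intro j _
    ring
  have hkt2 : (E2 t2).mulVec (k t2) = B2 := by
    rw [hkdef, Matrix.mulVec_mulVec, hE2]
    rw [← Matrix.exp_add_of_commute _ _ (((Commute.refl A2).smul_left t2).smul_right (-t2))]
    rw [← add_smul, add_neg_cancel, zero_smul, NormedSpace.exp_zero, Matrix.one_mulVec]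
  have hterm2 : ssm2dAux.PL (E2 t2) (F t2)
      = fun n1 n2 => x2 t1 t2 n1 * B2 n2 := by
    have step1 : ssm2dAux.PL (E2 t2) (F t2)
        = ∫ s1 in (0:ℝ)..t1, ssm2dAux.PL (E2 t2) (g s1 t2) := by
      rw [hFdef]
      exact ((ssm2dAux.PL (E2 t2)).intervalIntegral_comp_comm
        ((hg.comp (Continuous.prodMk continuous_id continuous_const)).intervalIntegrable
          0 t1)).symm
    have step2 : ∀ s1 : ℝ, ssm2dAux.PL (E2 t2) (g s1 t2)
        = ssm2dAux.tensCLM B2 (u s1 t2 • h1 s1) := by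
      intro s1
      funext n1 n2
      simp only [ssm2dAux.PL_apply, ssm2dAux.tensCLM_apply, hgdef, Pi.smul_apply,
        smul_eq_mul]
      have : B2 n2 = ∑ m, E2 t2 n2 m * k t2 m := by
        rw [← hkt2]; simp [Matrix.mulVec, dotProduct]
      rw [this]
      simp only [Finset.mul_sum]
      exact Finset.sum_congr rfl fun m _ => by ring
    rw [step1]
    simp_rw [step2]
    rw [(ssm2dAux.tensCLM B2).intervalIntegral_comp_comm]
    · rw [← hx2 t1 t2]
      funext n1 n2
      simp
    · apply Continuous.intervalIntegrable
      apply Continuous.fun_smul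
      · exact hu.comp (continuous_id.prodMk continuous_const)
      · exact hh1
  rw [hterm1, hterm2] at hmain
  exact hmain
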